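/- Let A be a static constant game, π either player, and Γ and Δ legal runs of ⫰ᴸA such that Δ is a π-delay of Γ. If Γ is a π-won run of ⫰ᴸA, then Δ is a π-won run of ⫰ᴸA. -/

import Mathlib

/- ============================================================
   Computability Logic: runs, constant games, delays, static
   games, and the tight/loose toggling-branching recurrences.
   ============================================================ -/

/-- The two players: `top` (⊤, the machine) and `bot` (⊥, the environment). -/
inductive Player : Type
  | top : Player
  | bot : Player
deriving DecidableEq

/-- The adversary (opposite) of a player. -/
def Player.opp : Player → Player
  | .top => .bot
  | .bot => .top

/-- Symbols of the fixed move alphabet: the bits `0` and `1`, the period `.`,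
the colon `:`, and (countably many) other characters. -/
inductive CSym : Type
  | b0 : CSym
  | b1 : CSym
  | dot : CSym
  | colon : CSym
  | ch : ℕ → CSym
deriving DecidableEq

/-- A move is a finite string over the fixed alphabet. -/
abbrev Move := List CSym

/-- A labmove is a move together with the label of the player who made it. -/
abbrev Labmove := Player × Move

/-- A run is a finite or infinite sequence of labmoves. -/
abbrev Run := Stream'.Seq Labmove

/-- A position is a finite run. -/
abbrev Position := List Labmove

/-- The symbol encoding a bit. -/
def bitSym (b : Bool) : CSym := if b then .b1 else .b0

/-- The move that is the bare bitstring `w`. -/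
def bitsMove (w : List Bool) : Move := w.map bitSym

/-- The (replicative-style) move `w:`. -/
def repMove (w : List Bool) : Move := bitsMove w ++ [.colon]

/-- The (non-replicative-style) move `w.α`. -/
def dotMove (w : List Bool) (α : Move) : Move := bitsMove w ++ (.dot :: α)

/-- Decode a move that is a bare bitstring. -/
def asBits : Move → Option (List Bool)
  | [] => some []
  | .b0 :: r => (asBits r).map (false :: ·)
  | .b1 :: r => (asBits r).map (true :: ·)
  | _ => none

/-- Decode a move of the form `w:` (`w` a bitstring). -/
def asRep : Move → Option (List Bool)
  | [.colon] => some []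
  | .b0 :: r => (asRep r).map (false :: ·)
  | .b1 :: r => (asRep r).map (true :: ·)
  | _ => none

/-- Decode a move of the form `w.α` (`w` a bitstring, `α` a move), splitting at
the (unique such) period. -/
def splitDot : Move → Option (List Bool × Move)
  | .dot :: r => some ([], r)
  | .b0 :: r => (splitDot r).map (fun p => (false :: p.1, p.2))
  | .b1 :: r => (splitDot r).map (fun p => (true :: p.1, p.2))
  | _ => none

/-- Infinite bitstrings. -/
abbrev IStr := ℕ → Bool

/-- The length-`n` initial segment of an infinite bitstring. -/
def prefOf (n : ℕ) (v : IStr) : List Bool := (List.range n).map v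

/-- `u` is a finite initial segment of the infinite bitstring `v`. -/
def IsPref (u : List Bool) (v : IStr) : Prop := u = prefOf u.length v

instance (u : List Bool) (v : IStr) : Decidable (IsPref u v) := by
  unfold IsPref; infer_instance

/-- The finite bitstring `w` with infinitely many `0`s appended. -/
def ezero (w : List Bool) : IStr := fun i => w.getD i false

/-- The finite bitstring `w` followed by the infinite bitstring `v`. -/
def capp (w : List Bool) (v : IStr) : IStr :=
  fun i => if i < w.length then w.getD i false else v (i - w.length)

/-- The indices of `s` whose entry is kept by the filtering function `p`. -/
def fmPred {α β : Type*} (p : α → Option β) (s : Stream'.Seq α) (i : ℕ) : Prop :=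
  ∃ a, s.get? i = some a ∧ (p a).isSome

/-- `p` has at least `n+1` witnesses. -/
def HasNth (p : ℕ → Prop) (n : ℕ) : Prop :=
  ∀ hf : (setOf p).Finite, n < hf.toFinset.card

open Classical in
/-- The subsequence of a (finite or infinite) sequence obtained by
filtering/translating its entries through `p`. -/
noncomputable def seqFilterMap {α β : Type*} (p : α → Option β) (s : Stream'.Seq α) :
    Stream'.Seq β := by
  refine ⟨fun k => if HasNth (fmPred p s) k
    then ((s.get? (Nat.nth (fmPred p s) k)).bind p) else none, ?_⟩
  intro n hn
  have hval : ∀ k, HasNth (fmPred p s) k →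
      (if HasNth (fmPred p s) k then ((s.get? (Nat.nth (fmPred p s) k)).bind p) else none)
        ≠ none := by
    intro k hk
    obtain ⟨a, ha, hpa⟩ := Nat.nth_mem (p := fmPred p s) k hk
    rw [if_pos hk, ha]
    simpa [Option.isSome_iff_ne_none] using hpa
  by_cases h : HasNth (fmPred p s) (n + 1)
  · exact absurd hn (hval n (fun hf => lt_of_le_of_lt (Nat.le_succ n) (h hf)))
  · exact if_neg h

/-- The filtered subsequence of a position (finite-run analogue of `seqFilterMap`). -/
def listFilterMap {β : Type*} (p : Labmove → Option β) (Φ : Position) : List β :=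
  Φ.filterMap p

/-- The filtering function for `Ω^{≼v}`: keep labmoves `π u.α` with `u` an initial
segment of `v`, turning them into `π α`. -/
def subFn (v : IStr) (lm : Labmove) : Option Labmove :=
  match splitDot lm.2 with
  | some (u, α) => if IsPref u v then some (lm.1, α) else none
  | none => none

/-- `Ω^{≼v}` for a run `Ω`. -/
noncomputable def subAt (v : IStr) (Γ : Run) : Run := seqFilterMap (subFn v) Γ

/-- `Φ^{≼v}` for a position `Φ`. -/
def subAtL (v : IStr) (Φ : Position) : Position := Φ.filterMap (subFn v)

/-- The result of changing every label in a run to its opposite. -/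
def negRun (Γ : Run) : Run := Γ.map (fun lm => (lm.1.opp, lm.2))

/-- The subsequence of `π`-labeled moves of a run. -/
noncomputable def subseqOf (π : Player) (Γ : Run) : Run :=
  seqFilterMap (fun lm => if lm.1 = π then some lm else none) Γ

/-- The subsequence of `π`-labeled moves of a position. -/
def subL (π : Player) (Φ : Position) : Position :=
  Φ.filter (fun lm => decide (lm.1 = π))

/-- The indices of the `π`-labeled moves of a run. -/
def labPred (π : Player) (Γ : Run) (i : ℕ) : Prop := ∃ m, Γ.get? i = some (π, m)

/-- `Δ` is a `π`-delay of `Γ`: (1) for both players `π'`, the subsequence of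
`π'`-labeled moves of `Δ` is identical to that of `Γ`; (2) whenever the `n`-th
`π`-labeled move is made later than the `k`-th `¬π`-labeled move in `Γ`, so is
it in `Δ`. -/
def Delay (π : Player) (Δ Γ : Run) : Prop :=
  (∀ π' : Player, subseqOf π' Δ = subseqOf π' Γ) ∧
  (∀ n k : ℕ, HasNth (labPred π Γ) n → HasNth (labPred π.opp Γ) k →
    Nat.nth (labPred π Γ) n > Nat.nth (labPred π.opp Γ) k →
    Nat.nth (labPred π Δ) n > Nat.nth (labPred π.opp Δ) k)

/-- A constant game: a set of legal runs and an assignment of winners. -/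
structure Game where
  legal : Run → Prop
  wins : Run → Player

/-- Well-formedness of a constant game: the empty position is legal, and a run
is legal iff all of its finite initial segments are. -/
def Game.IsGame (A : Game) : Prop :=
  A.legal (Stream'.Seq.ofList []) ∧
  ∀ Γ : Run, A.legal Γ ↔ ∀ n : ℕ, A.legal (Stream'.Seq.ofList (Stream'.Seq.take n Γ))

/-- The run `Γ` is `π`-illegal in `A`: its shortest illegal initial segment has
the form `⟨Φ, πα⟩`. -/
def Game.IllegalBy (A : Game) (π : Player) (Γ : Run) : Prop :=
  ∃ n : ℕ,
    (∀ m ≤ n, A.legal (Stream'.Seq.ofList (Stream'.Seq.take m Γ))) ∧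
    ¬ A.legal (Stream'.Seq.ofList (Stream'.Seq.take (n + 1) Γ)) ∧
    ∃ m : Move, Γ.get? n = some (π, m)

/-- `Γ` is a `π`-won run of `A`: either `Γ` is legal and `Wn` names `π`, or `Γ`
is `¬π`-illegal (an illegal run is won by the adversary of the first offender). -/
def Game.won (A : Game) (π : Player) (Γ : Run) : Prop :=
  (A.legal Γ ∧ A.wins Γ = π) ∨ A.IllegalBy π.opp Γ

/-- A constant game is static iff `π`-won runs are preserved by `π`-delays. -/
def Game.Static (A : Game) : Prop :=
  ∀ (π : Player) (Γ Δ : Run), Delay π Δ Γ → A.won π Γ → A.won π Δ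

/-- The negation `¬A` of a constant game: the roles of the players are interchanged. -/
def Game.neg (A : Game) : Game where
  legal Γ := A.legal (negRun Γ)
  wins Γ := (A.wins (negRun Γ)).opp

/-- `w` is an actual node of the position `Φ`: `w` is empty, or `w = u0` or
`w = u1` for some bitstring `u` such that `Φ` contains the move `u:`. -/
def ActualNode (Φ : Position) (w : List Bool) : Prop :=
  w = [] ∨ ∃ (u : List Bool) (b : Bool), w = u ++ [b] ∧ ∃ π : Player, (π, repMove u) ∈ Φ

/-- `w` is an outer actual node of `Φ`: an actual node that is not a proper
prefix of any other actual node of `Φ`. -/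
def OuterNode (Φ : Position) (w : List Bool) : Prop :=
  ActualNode Φ w ∧ ∀ w' : List Bool, ActualNode Φ w' → w <+: w' → w = w'

/-- `m` is a legal move by `π` in the legal position `Φ` of `⫰ᵀA`: a switch
move, a replicative move, or a non-replicative move. -/
def TightMove (A : Game) (Φ : Position) (π : Player) (m : Move) : Prop :=
  (π = .bot ∧ ∃ w : List Bool, asBits m = some w ∧ ActualNode Φ w) ∨
  (π = .bot ∧ ∃ w : List Bool, asRep m = some w ∧ OuterNode Φ w) ∨
  (∃ (w : List Bool) (α : Move), splitDot m = some (w, α) ∧ ActualNode Φ w ∧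
    ∀ v : IStr, A.legal (Stream'.Seq.ofList (subAtL (capp w v) Φ ++ [(π, α)])))

/-- The legal positions of `⫰ᵀA`. -/
inductive TightLegalPos (A : Game) : Position → Prop
  | nil : TightLegalPos A []
  | snoc {Φ : Position} {π : Player} {m : Move} :
      TightLegalPos A Φ → TightMove A Φ π m → TightLegalPos A (Φ ++ [(π, m)])

/-- The indices of the switch moves (by player `π`) of a run: `π`-labeled moves
whose move part is a bare bitstring. -/
def SwSetP (π : Player) (Γ : Run) : Set ℕ :=
  {i | ∃ (m : Move) (w : List Bool), Γ.get? i = some (π, m) ∧ asBits m = some w}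

open Classical in
/-- The index of the last switch move (by `π`) of a run, when there are finitely
many and at least one (junk value `0` otherwise). -/
noncomputable def lastSwitchIdxP (π : Player) (Γ : Run) : ℕ :=
  if h : (SwSetP π Γ).Finite ∧ (SwSetP π Γ).Nonempty then
    h.1.toFinset.max' (h.1.toFinset_nonempty.mpr h.2)
  else 0

open Classical in
/-- The bitstring of the last switch move (by `π`) of a run; the empty bitstring
if there are no switch moves (or infinitely many). -/
noncomputable def lastSwitchBitsP (π : Player) (Γ : Run) : List Bool :=
  if (SwSetP π Γ).Finite ∧ (SwSetP π Γ).Nonempty then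
    ((Γ.get? (lastSwitchIdxP π Γ)).bind (fun lm => asBits lm.2)).getD []
  else []

/-- The infinite bitstring `t`: the last (`⊥`-made) switch move of `Γ` with
infinitely many `0`s appended, or the infinite string of `0`s if there are no
switch moves. -/
noncomputable def tStream (Γ : Run) : IStr := ezero (lastSwitchBitsP .bot Γ)

open Classical in
/-- The tight toggling-branching recurrence `⫰ᵀA`. -/
noncomputable def tight (A : Game) : Game where
  legal Γ := ∀ n : ℕ, TightLegalPos A (Stream'.Seq.take n Γ)
  wins Γ :=
    if (SwSetP .bot Γ).Finite ∧ A.won .bot (subAt (tStream Γ) Γ) then .bot else .top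

/-- The tight toggling-branching corecurrence `⫯ᵀA = ¬⫰ᵀ¬A`. -/
noncomputable def cotight (A : Game) : Game := Game.neg (tight (Game.neg A))

/-- The shape of legal labmoves of `⫰ᴸA`: `⊥w` (a switch move) for a bitstring
`w`, or `πw.α`. -/
def LooseShape (lm : Labmove) : Prop :=
  (lm.1 = .bot ∧ ∃ w : List Bool, asBits lm.2 = some w) ∨
  (∃ (w : List Bool) (α : Move), splitDot lm.2 = some (w, α))

open Classical in
/-- The loose toggling-branching recurrence `⫰ᴸA`. -/
noncomputable def loose (A : Game) : Game where
  legal Γ := (∀ (i : ℕ) (lm : Labmove), Γ.get? i = some lm → LooseShape lm) ∧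
    ∀ v : IStr, A.legal (subAt v Γ)
  wins Γ :=
    if (SwSetP .bot Γ).Finite ∧ A.won .bot (subAt (tStream Γ) Γ) then .bot else .top

/-- The loose toggling-branching corecurrence `⫯ᴸA = ¬⫰ᴸ¬A`. -/
noncomputable def coloose (A : Game) : Game := Game.neg (loose (Game.neg A))

/-- The sequence of (bitstrings of) switch moves made by `π` in a run, in order. -/
noncomputable def swSeq (π : Player) (Γ : Run) : Stream'.Seq (List Bool) :=
  seqFilterMap (fun lm => if lm.1 = π then asBits lm.2 else none) Γ

/-- The move `i.α` (component prefix for parallel combinations). -/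
def compMove (i : ℕ) (α : Move) : Move := .ch i :: .dot :: α

/-- `Δ^{i.}`: the labmoves of the form `π i.α` of `Δ`, with the prefix `i.` removed. -/
noncomputable def proj (i : ℕ) (Δ : Run) : Run :=
  seqFilterMap (fun lm =>
    match lm.2 with
    | .ch j :: .dot :: α => if j = i then some (lm.1, α) else none
    | _ => none) Δ

open Classical in
/-- The parallel disjunction `A ∨ B`. -/
noncomputable def Game.por (A B : Game) : Game where
  legal Δ :=
    (∀ (k : ℕ) (lm : Labmove), Δ.get? k = some lm →
      ∃ (i : ℕ) (α : Move), (i = 1 ∨ i = 2) ∧ lm.2 = compMove i α) ∧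
    A.legal (proj 1 Δ) ∧ B.legal (proj 2 Δ)
  wins Δ :=
    if A.won .top (proj 1 Δ) ∨ B.won .top (proj 2 Δ) then .top else .bot

section Infra
open Classical

variable {α β γ : Type*}

private lemma option_eq_of_some_iff {x y : Option γ}
    (h : ∀ c, x = some c ↔ y = some c) : x = y := by
  cases x with
  | none =>
    cases y with
    | none => rfl
    | some c => exact (h c).mpr rfl
  | some c => exact ((h c).mp rfl).symm

lemma hasNth_mono {P : ℕ → Prop} {k n : ℕ} (hkn : k ≤ n) (h : HasNth P n) : HasNth P k :=
  fun hf => lt_of_le_of_lt hkn (h hf)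

lemma hasNth_iff {P : ℕ → Prop} {k : ℕ} :
    HasNth P k ↔ ∃ i, P i ∧ Nat.count P i = k := by
  constructor
  · intro h
    exact ⟨Nat.nth P k, Nat.nth_mem k h, Nat.count_nth h⟩
  · rintro ⟨i, hi, rfl⟩
    exact fun hf => Nat.count_lt_card hf hi

lemma nth_eq_of {P : ℕ → Prop} {i k : ℕ} (hi : P i) (hc : Nat.count P i = k) :
    Nat.nth P k = i := by
  subst hc; exact Nat.nth_count hi

lemma nth_lt_nth_iff {P : ℕ → Prop} {j1 j2 : ℕ}
    (h1 : HasNth P j1) (h2 : HasNth P j2) :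
    Nat.nth P j1 < Nat.nth P j2 ↔ j1 < j2 := by
  constructor
  · intro h
    by_contra hle
    push_neg at hle
    rcases eq_or_lt_of_le hle with rfl | hlt
    · exact lt_irrefl _ h
    · exact absurd h (not_lt.mpr (le_of_lt (Nat.nth_lt_nth' hlt h1)))
  · intro h; exact Nat.nth_lt_nth' h h2

lemma sfm_get? (p : α → Option β) (s : Stream'.Seq α) (k : ℕ) :
    (seqFilterMap p s).get? k =
      if HasNth (fmPred p s) k then (s.get? (Nat.nth (fmPred p s) k)).bind p else none := rfl

lemma sfm_get?_eq_some {p : α → Option β} {s : Stream'.Seq α} {k : ℕ} {b : β} :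
    (seqFilterMap p s).get? k = some b ↔
      ∃ i, fmPred p s i ∧ Nat.count (fmPred p s) i = k ∧ (s.get? i).bind p = some b := by
  rw [sfm_get?]
  split_ifs with h
  · constructor
    · intro hv
      exact ⟨Nat.nth (fmPred p s) k, Nat.nth_mem k h, Nat.count_nth h, hv⟩
    · rintro ⟨i, hi, hc, hv⟩
      rwa [nth_eq_of hi hc]
  · constructor
    · intro hv; exact absurd hv (by simp)
    · rintro ⟨i, hi, hc, hv⟩
      exact absurd (hasNth_iff.mpr ⟨i, hi, hc⟩) h

lemma sfm_get?_eq_none {p : α → Option β} {s : Stream'.Seq α} {k : ℕ} :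
    (seqFilterMap p s).get? k = none ↔ ¬ HasNth (fmPred p s) k := by
  rw [sfm_get?]
  split_ifs with h
  · obtain ⟨a, ha, hpa⟩ := Nat.nth_mem (p := fmPred p s) k h
    rw [ha]
    simp only [Option.bind_some]
    constructor
    · intro h0; rw [h0] at hpa; simp at hpa
    · intro h0; exact absurd h h0
  · simp [h]

lemma fm_comp_mem {p : α → Option β} {q : β → Option γ} {s : Stream'.Seq α} {i : ℕ} :
    fmPred (fun a => (p a).bind q) s i ↔
      fmPred p s i ∧ fmPred q (seqFilterMap p s) (Nat.count (fmPred p s) i) := by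
  constructor
  · rintro ⟨a, ha, hq⟩
    cases hpa : p a with
    | none => simp only [hpa] at hq; simp at hq
    | some b =>
      have hFi : fmPred p s i := ⟨a, ha, by simp [hpa]⟩
      have hb : (seqFilterMap p s).get? (Nat.count (fmPred p s) i) = some b :=
        sfm_get?_eq_some.mpr ⟨i, hFi, rfl, by rw [ha]; simp [hpa]⟩
      simp only [hpa, Option.bind_some] at hq
      exact ⟨hFi, ⟨b, hb, hq⟩⟩
  · rintro ⟨hFi, b', hb', hqb'⟩
    obtain ⟨a, ha, hpa⟩ := hFi
    obtain ⟨b, hpab⟩ := Option.isSome_iff_exists.mp hpa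
    have hFi : fmPred p s i := ⟨a, ha, hpa⟩
    have hb : (seqFilterMap p s).get? (Nat.count (fmPred p s) i) = some b :=
      sfm_get?_eq_some.mpr ⟨i, hFi, rfl, by rw [ha]; simp [hpab]⟩
    rw [hb] at hb'
    obtain rfl : b = b' := by injection hb'
    exact ⟨a, ha, by simp [hpab, hqb']⟩

lemma fm_comp_count {p : α → Option β} {q : β → Option γ} {s : Stream'.Seq α} (i : ℕ) :
    Nat.count (fmPred (fun a => (p a).bind q) s) i
      = Nat.count (fmPred q (seqFilterMap p s)) (Nat.count (fmPred p s) i) := by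
  induction i with
  | zero => simp [Nat.count_zero]
  | succ i ih =>
    by_cases hF : fmPred p s i
    · by_cases hH : fmPred (fun a => (p a).bind q) s i
      · have hG : fmPred q (seqFilterMap p s) (Nat.count (fmPred p s) i) :=
          (fm_comp_mem.mp hH).2
        rw [Nat.count_succ, Nat.count_succ, if_pos hH, if_pos hF, ih,
          Nat.count_succ, if_pos hG]
      · have hG : ¬ fmPred q (seqFilterMap p s) (Nat.count (fmPred p s) i) :=
          fun hg => hH (fm_comp_mem.mpr ⟨hF, hg⟩)
        rw [Nat.count_succ, Nat.count_succ, if_neg hH, if_pos hF, ih,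
          Nat.count_succ, if_neg hG]
    · have hH : ¬ fmPred (fun a => (p a).bind q) s i := fun hh => hF (fm_comp_mem.mp hh).1
      rw [Nat.count_succ, Nat.count_succ, if_neg hH, if_neg hF, ih]
      simp

end Infra

section Infra2
open Classical

variable {α β γ : Type*}

lemma sfm_comp (p : α → Option β) (q : β → Option γ) (s : Stream'.Seq α) :
    seqFilterMap q (seqFilterMap p s) = seqFilterMap (fun a => (p a).bind q) s := by
  apply Stream'.Seq.ext
  intro k
  apply option_eq_of_some_iff
  intro c
  rw [sfm_get?_eq_some, sfm_get?_eq_some]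
  constructor
  · rintro ⟨j, hGj, hcG, hv⟩
    obtain ⟨b, hb, hqb⟩ := hGj
    rw [hb] at hv
    simp only [Option.bind_some] at hv
    obtain ⟨i, hFi, hcF, hvb⟩ := sfm_get?_eq_some.mp hb
    refine ⟨i, fm_comp_mem.mpr ⟨hFi, by rw [hcF]; exact ⟨b, hb, hqb⟩⟩, ?_, ?_⟩
    · rw [fm_comp_count, hcF, hcG]
    · obtain ⟨a, ha, hpa⟩ := hFi
      rw [ha] at hvb ⊢
      simp only [Option.bind_some] at hvb ⊢
      rw [hvb]
      exact hv
  · rintro ⟨i, hHi, hcH, hv⟩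
    obtain ⟨hFi, hG⟩ := fm_comp_mem.mp hHi
    refine ⟨Nat.count (fmPred p s) i, hG, by rw [← fm_comp_count, hcH], ?_⟩
    obtain ⟨a, ha, hpa⟩ := hFi
    obtain ⟨b, hpab⟩ := Option.isSome_iff_exists.mp hpa
    have hb : (seqFilterMap p s).get? (Nat.count (fmPred p s) i) = some b :=
      sfm_get?_eq_some.mpr ⟨i, ⟨a, ha, hpa⟩, rfl, by rw [ha]; simp [hpab]⟩
    rw [hb]
    rw [ha] at hv
    simp only [Option.bind_some, hpab] at hv
    simpa using hv

lemma hasNth_comp {p : α → Option β} {q : β → Option γ} {s : Stream'.Seq α} {n : ℕ} :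
    HasNth (fmPred (fun a => (p a).bind q) s) n ↔
      HasNth (fmPred q (seqFilterMap p s)) n := by
  rw [hasNth_iff, hasNth_iff]
  constructor
  · rintro ⟨i, hHi, hcH⟩
    obtain ⟨hFi, hG⟩ := fm_comp_mem.mp hHi
    exact ⟨Nat.count (fmPred p s) i, hG, by rw [← fm_comp_count, hcH]⟩
  · rintro ⟨j, hGj, hcG⟩
    obtain ⟨b, hb, hqb⟩ := hGj
    obtain ⟨i, hFi, hcF, hvb⟩ := sfm_get?_eq_some.mp hb
    refine ⟨i, fm_comp_mem.mpr ⟨hFi, by rw [hcF]; exact ⟨b, hb, hqb⟩⟩, ?_⟩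
    rw [fm_comp_count, hcF, hcG]

lemma nth_comp {p : α → Option β} {q : β → Option γ} {s : Stream'.Seq α} {n : ℕ}
    (h : HasNth (fmPred q (seqFilterMap p s)) n) :
    HasNth (fmPred p s) (Nat.nth (fmPred q (seqFilterMap p s)) n) ∧
    Nat.nth (fmPred (fun a => (p a).bind q) s) n
      = Nat.nth (fmPred p s) (Nat.nth (fmPred q (seqFilterMap p s)) n) := by
  have hGj : fmPred q (seqFilterMap p s) (Nat.nth (fmPred q (seqFilterMap p s)) n) :=
    Nat.nth_mem n h
  have hcGj : Nat.count (fmPred q (seqFilterMap p s)) (Nat.nth (fmPred q (seqFilterMap p s)) n)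
      = n := Nat.count_nth h
  obtain ⟨b, hb, hqb⟩ := hGj
  obtain ⟨i, hFi, hcF, hvb⟩ := sfm_get?_eq_some.mp hb
  have hHi : fmPred (fun a => (p a).bind q) s i :=
    fm_comp_mem.mpr ⟨hFi, by rw [hcF]; exact ⟨b, hb, hqb⟩⟩
  have hcH : Nat.count (fmPred (fun a => (p a).bind q) s) i = n := by
    rw [fm_comp_count, hcF, hcGj]
  refine ⟨hasNth_iff.mpr ⟨i, hFi, hcF⟩, ?_⟩
  rw [nth_eq_of hHi hcH, nth_eq_of hFi hcF]

lemma fmPred_cons_zero {p : α → Option β} {a : α} {s : Stream'.Seq α} :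
    fmPred p (Stream'.Seq.cons a s) 0 ↔ (p a).isSome := by
  constructor
  · rintro ⟨x, hx, hpx⟩
    rw [Stream'.Seq.get?_cons_zero] at hx
    obtain rfl : a = x := by injection hx
    exact hpx
  · intro h
    exact ⟨a, Stream'.Seq.get?_cons_zero a s, h⟩

lemma fmPred_cons_succ {p : α → Option β} {a : α} {s : Stream'.Seq α} {i : ℕ} :
    fmPred p (Stream'.Seq.cons a s) (i + 1) ↔ fmPred p s i := by
  unfold fmPred
  rw [Stream'.Seq.get?_cons_succ]

lemma count_fmPred_cons {p : α → Option β} {a : α} {s : Stream'.Seq α} (i : ℕ) :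
    Nat.count (fmPred p (Stream'.Seq.cons a s)) (i + 1)
      = Nat.count (fmPred p s) i + (if (p a).isSome then 1 else 0) := by
  induction i with
  | zero =>
    by_cases h : (p a).isSome
    · rw [Nat.count_succ, if_pos (fmPred_cons_zero.mpr h), if_pos h,
        Nat.count_zero, Nat.count_zero]
    · rw [Nat.count_succ, if_neg (fun hh => h (fmPred_cons_zero.mp hh)), if_neg h,
        Nat.count_zero, Nat.count_zero]
  | succ i ih =>
    rw [Nat.count_succ, ih, Nat.count_succ (p := fmPred p s)]
    by_cases h : fmPred p s i
    · rw [if_pos (fmPred_cons_succ.mpr h), if_pos h]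
      omega
    · rw [if_neg (fun hh => h (fmPred_cons_succ.mp hh)), if_neg h]
      omega

lemma sfm_nil {p : α → Option β} :
    seqFilterMap p (Stream'.Seq.nil) = Stream'.Seq.nil := by
  apply Stream'.Seq.ext
  intro k
  rw [Stream'.Seq.get?_nil]
  apply sfm_get?_eq_none.mpr
  intro h
  obtain ⟨i, ⟨a, ha, -⟩, -⟩ := hasNth_iff.mp h
  rw [Stream'.Seq.get?_nil] at ha
  exact absurd ha (by simp)

lemma sfm_cons_some {p : α → Option β} {a : α} {b : β} (h : p a = some b)
    (s : Stream'.Seq α) :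
    seqFilterMap p (Stream'.Seq.cons a s) = Stream'.Seq.cons b (seqFilterMap p s) := by
  apply Stream'.Seq.ext
  intro k
  cases k with
  | zero =>
    rw [Stream'.Seq.get?_cons_zero]
    exact sfm_get?_eq_some.mpr ⟨0, fmPred_cons_zero.mpr (by simp [h]), Nat.count_zero _,
      by rw [Stream'.Seq.get?_cons_zero]; simp [h]⟩
  | succ k =>
    rw [Stream'.Seq.get?_cons_succ]
    apply option_eq_of_some_iff
    intro c
    rw [sfm_get?_eq_some, sfm_get?_eq_some]
    constructor
    · rintro ⟨i, hi, hc, hv⟩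
      cases i with
      | zero => rw [Nat.count_zero] at hc; exact absurd hc (by omega)
      | succ i =>
        rw [count_fmPred_cons, if_pos (by simp [h])] at hc
        exact ⟨i, fmPred_cons_succ.mp hi, by omega,
          by rwa [Stream'.Seq.get?_cons_succ] at hv⟩
    · rintro ⟨i, hi, hc, hv⟩
      exact ⟨i + 1, fmPred_cons_succ.mpr hi,
        by rw [count_fmPred_cons, if_pos (by simp [h])]; omega,
        by rwa [Stream'.Seq.get?_cons_succ]⟩

lemma sfm_cons_none {p : α → Option β} {a : α} (h : p a = none) (s : Stream'.Seq α) :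
    seqFilterMap p (Stream'.Seq.cons a s) = seqFilterMap p s := by
  apply Stream'.Seq.ext
  intro k
  apply option_eq_of_some_iff
  intro c
  rw [sfm_get?_eq_some, sfm_get?_eq_some]
  constructor
  · rintro ⟨i, hi, hc, hv⟩
    cases i with
    | zero => exact absurd (fmPred_cons_zero.mp hi) (by simp [h])
    | succ i =>
      rw [count_fmPred_cons, if_neg (by simp [h])] at hc
      exact ⟨i, fmPred_cons_succ.mp hi, by omega,
        by rwa [Stream'.Seq.get?_cons_succ] at hv⟩
  · rintro ⟨i, hi, hc, hv⟩
    exact ⟨i + 1, fmPred_cons_succ.mpr hi,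
      by rw [count_fmPred_cons, if_neg (by simp [h])]; omega,
      by rwa [Stream'.Seq.get?_cons_succ]⟩

lemma sfm_ofList (p : α → Option β) (l : List α) :
    seqFilterMap p (Stream'.Seq.ofList l) = Stream'.Seq.ofList (l.filterMap p) := by
  induction l with
  | nil =>
    rw [List.filterMap_nil, Stream'.Seq.ofList_nil, sfm_nil]
    exact Stream'.Seq.ofList_nil.symm
  | cons a l ih =>
    rw [Stream'.Seq.ofList_cons]
    cases h : p a with
    | none => rw [sfm_cons_none h, ih, List.filterMap_cons, h]
    | some b => rw [sfm_cons_some h, ih, List.filterMap_cons, h, Stream'.Seq.ofList_cons]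

lemma seq_take_nil (n : ℕ) : (Stream'.Seq.nil : Stream'.Seq α).take n = [] := by
  cases n with
  | zero => rfl
  | succ n => simp [Stream'.Seq.take, Stream'.Seq.destruct_nil]

lemma seq_take_cons (b : α) (t : Stream'.Seq α) (m : ℕ) :
    (Stream'.Seq.cons b t).take (m + 1) = b :: t.take m := by
  simp [Stream'.Seq.take, Stream'.Seq.destruct_cons]

lemma sfm_take (p : α → Option β) :
    ∀ (n : ℕ) (s : Stream'.Seq α),
      List.filterMap p (s.take n)
        = (seqFilterMap p s).take ((List.filterMap p (s.take n)).length)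
  | 0, s => by simp [Stream'.Seq.take]
  | (n+1), s => by
    refine Stream'.Seq.recOn (motive := fun s => List.filterMap p (Stream'.Seq.take (n + 1) s)
        = Stream'.Seq.take (List.filterMap p (Stream'.Seq.take (n + 1) s)).length
          (seqFilterMap p s)) s ?_ ?_
    · show List.filterMap p (Stream'.Seq.take (n + 1) Stream'.Seq.nil) = _
      rw [seq_take_nil, sfm_nil, List.filterMap_nil, seq_take_nil]
    · intro a s'
      show List.filterMap p (Stream'.Seq.take (n + 1) (Stream'.Seq.cons a s')) = _
      rw [seq_take_cons]
      cases h : p a with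
      | none =>
        rw [List.filterMap_cons, h, sfm_cons_none h]
        exact sfm_take p n s'
      | some b =>
        rw [List.filterMap_cons, h, sfm_cons_some h]
        rw [List.length_cons, seq_take_cons]
        rw [← sfm_take p n s']

end Infra2

section Infra3
open Classical

/-- The label-filtering function underlying `subseqOf`. -/
def labFn (π : Player) : Labmove → Option Labmove :=
  fun lm => if lm.1 = π then some lm else none

lemma subseqOf_eq_sfm (π : Player) (Γ : Run) :
    subseqOf π Γ = seqFilterMap (labFn π) Γ := rfl

lemma labPred_eq (π : Player) (Γ : Run) : labPred π Γ = fmPred (labFn π) Γ := by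
  funext i
  apply propext
  constructor
  · rintro ⟨m, hm⟩
    exact ⟨(π, m), hm, by simp [labFn]⟩
  · rintro ⟨⟨ρ, m⟩, ha, hs⟩
    by_cases h : ρ = π
    · subst h; exact ⟨m, ha⟩
    · simp [labFn, h] at hs

lemma key1 {p : Labmove → Option Labmove}
    (hcomm : ∀ (ρ : Player) (a : Labmove), ((labFn ρ) a).bind p = (p a).bind (labFn ρ))
    (s : Run) (ρ : Player) (m : ℕ)
    (hm : HasNth (labPred ρ (seqFilterMap p s)) m) :
    HasNth (fmPred p (subseqOf ρ s)) m ∧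
    HasNth (labPred ρ s) (Nat.nth (fmPred p (subseqOf ρ s)) m) ∧
    HasNth (fmPred p s) (Nat.nth (labPred ρ (seqFilterMap p s)) m) ∧
    Nat.nth (fmPred p s) (Nat.nth (labPred ρ (seqFilterMap p s)) m)
      = Nat.nth (labPred ρ s) (Nat.nth (fmPred p (subseqOf ρ s)) m) := by
  have hfn : (fun a => ((labFn ρ) a).bind p) = (fun a => (p a).bind (labFn ρ)) :=
    funext (hcomm ρ)
  rw [labPred_eq] at hm
  have hH : HasNth (fmPred (fun a => (p a).bind (labFn ρ)) s) m := hasNth_comp.mpr hm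
  have hA := nth_comp (p := p) (q := labFn ρ) (s := s) hm
  have hH' : HasNth (fmPred (fun a => ((labFn ρ) a).bind p) s) m := by rw [hfn]; exact hH
  have hG2 : HasNth (fmPred p (seqFilterMap (labFn ρ) s)) m := hasNth_comp.mp hH'
  have hB := nth_comp (p := labFn ρ) (q := p) (s := s) hG2
  have hB2 : Nat.nth (fmPred (fun a => (p a).bind (labFn ρ)) s) m
      = Nat.nth (fmPred (labFn ρ) s) (Nat.nth (fmPred p (seqFilterMap (labFn ρ) s)) m) := by
    rw [← hfn]; exact hB.2
  refine ⟨?_, ?_, ?_, ?_⟩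
  · rw [subseqOf_eq_sfm]; exact hG2
  · rw [labPred_eq, subseqOf_eq_sfm]; exact hB.1
  · rw [labPred_eq]; exact hA.1
  · rw [labPred_eq, labPred_eq, subseqOf_eq_sfm, ← hA.2, ← hB2]

lemma key2 {p : Labmove → Option Labmove}
    (hcomm : ∀ (ρ : Player) (a : Labmove), ((labFn ρ) a).bind p = (p a).bind (labFn ρ))
    (s : Run) (ρ : Player) (m : ℕ)
    (hm : HasNth (fmPred p (subseqOf ρ s)) m) :
    HasNth (labPred ρ (seqFilterMap p s)) m := by
  have hfn : (fun a => ((labFn ρ) a).bind p) = (fun a => (p a).bind (labFn ρ)) :=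
    funext (hcomm ρ)
  rw [subseqOf_eq_sfm] at hm
  have hH' : HasNth (fmPred (fun a => ((labFn ρ) a).bind p) s) m := hasNth_comp.mpr hm
  have hH : HasNth (fmPred (fun a => (p a).bind (labFn ρ)) s) m := by rw [← hfn]; exact hH'
  rw [labPred_eq]
  exact hasNth_comp.mp hH

lemma delay_sfm (π : Player) {Γ Δ : Run} (p : Labmove → Option Labmove)
    (hcomm : ∀ (ρ : Player) (a : Labmove), ((labFn ρ) a).bind p = (p a).bind (labFn ρ))
    (hd : Delay π Δ Γ) :
    Delay π (seqFilterMap p Δ) (seqFilterMap p Γ) := by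
  have hsub : ∀ (ρ : Player) (s : Run),
      subseqOf ρ (seqFilterMap p s) = seqFilterMap p (subseqOf ρ s) := by
    intro ρ s
    rw [subseqOf_eq_sfm (Γ := seqFilterMap p s), sfm_comp, subseqOf_eq_sfm, sfm_comp]
    congr 1
    funext a
    exact (hcomm ρ a).symm
  constructor
  · intro ρ
    rw [hsub, hsub, hd.1 ρ]
  · intro n k hn hk hgt
    obtain ⟨h1n, h2n, h3n, h4n⟩ := key1 hcomm Γ π n hn
    obtain ⟨h1k, h2k, h3k, h4k⟩ := key1 hcomm Γ π.opp k hk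
    -- translate the inequality into Γ
    have hgtΓ : Nat.nth (labPred π Γ) (Nat.nth (fmPred p (subseqOf π Γ)) n)
        > Nat.nth (labPred π.opp Γ) (Nat.nth (fmPred p (subseqOf π.opp Γ)) k) := by
      rw [← h4n, ← h4k]
      exact (nth_lt_nth_iff h3k h3n).mpr hgt
    have hdd := hd.2 _ _ h2n h2k hgtΓ
    -- Δ side
    have h1nΔ : HasNth (fmPred p (subseqOf π Δ)) n := by rw [hd.1 π]; exact h1n
    have h1kΔ : HasNth (fmPred p (subseqOf π.opp Δ)) k := by rw [hd.1 π.opp]; exact h1k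
    have hnΔ : HasNth (labPred π (seqFilterMap p Δ)) n := key2 hcomm Δ π n h1nΔ
    have hkΔ : HasNth (labPred π.opp (seqFilterMap p Δ)) k := key2 hcomm Δ π.opp k h1kΔ
    obtain ⟨h1nΔ', h2nΔ, h3nΔ, h4nΔ⟩ := key1 hcomm Δ π n hnΔ
    obtain ⟨h1kΔ', h2kΔ, h3kΔ, h4kΔ⟩ := key1 hcomm Δ π.opp k hkΔ
    -- the positions within the subsequences agree between Γ and Δ
    have heqn : Nat.nth (fmPred p (subseqOf π Δ)) n = Nat.nth (fmPred p (subseqOf π Γ)) n := by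
      rw [hd.1 π]
    have heqk : Nat.nth (fmPred p (subseqOf π.opp Δ)) k
        = Nat.nth (fmPred p (subseqOf π.opp Γ)) k := by
      rw [hd.1 π.opp]
    have hgtΔ : Nat.nth (fmPred p Δ) (Nat.nth (labPred π (seqFilterMap p Δ)) n)
        > Nat.nth (fmPred p Δ) (Nat.nth (labPred π.opp (seqFilterMap p Δ)) k) := by
      rw [h4nΔ, h4kΔ, heqn, heqk]
      exact hdd
    exact (nth_lt_nth_iff h3kΔ h3nΔ).mp hgtΔ

end Infra3

section Infra4
open Classical

lemma subFn_comm (v : IStr) (ρ : Player) (a : Labmove) :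
    ((labFn ρ) a).bind (subFn v) = ((subFn v) a).bind (labFn ρ) := by
  obtain ⟨σ, m⟩ := a
  by_cases h : σ = ρ
  · subst h
    simp only [labFn, if_pos rfl, Option.bind_some]
    unfold subFn
    cases hs : splitDot m with
    | none => simp [hs]
    | some uα =>
      obtain ⟨u, α⟩ := uα
      by_cases hp : IsPref u v <;> simp [hs, hp, labFn]
  · simp only [labFn, if_neg h, Option.bind_none]
    unfold subFn
    cases hs : splitDot m with
    | none => simp [hs]
    | some uα =>
      obtain ⟨u, α⟩ := uα
      by_cases hp : IsPref u v <;> simp [hs, hp, h, labFn]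

/-- The switch-move filtering function. -/
def swf : Labmove → Option (List Bool) :=
  fun lm => if lm.1 = Player.bot then asBits lm.2 else none

lemma swf_eq (a : Labmove) :
    swf a = ((labFn Player.bot) a).bind (fun lm => asBits lm.2) := by
  obtain ⟨σ, m⟩ := a
  by_cases h : σ = Player.bot <;> simp [swf, labFn, h]

lemma swseq_eq_of_delay {π : Player} {Γ Δ : Run} (hd : Delay π Δ Γ) :
    seqFilterMap swf Δ = seqFilterMap swf Γ := by
  have hfac : ∀ s : Run,
      seqFilterMap swf s = seqFilterMap (fun lm => asBits lm.2) (subseqOf Player.bot s) := by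
    intro s
    rw [subseqOf_eq_sfm, sfm_comp]
    congr 1
    funext a
    exact swf_eq a
  rw [hfac, hfac, hd.1 Player.bot]

lemma swSetP_eq (Γ : Run) : SwSetP Player.bot Γ = setOf (fmPred swf Γ) := by
  ext i
  constructor
  · rintro ⟨m, w, hm, hw⟩
    exact ⟨(Player.bot, m), hm, by simp [swf, hw]⟩
  · rintro ⟨⟨σ, m⟩, hm, hs⟩
    by_cases h : σ = Player.bot
    · subst h
      simp only [swf, if_pos rfl] at hs
      obtain ⟨w, hw⟩ := Option.isSome_iff_exists.mp hs
      exact ⟨m, w, hm, hw⟩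
    · simp [swf, h] at hs

lemma finite_iff_exists_not_hasNth {P : ℕ → Prop} :
    (setOf P).Finite ↔ ∃ n, ¬ HasNth P n := by
  constructor
  · intro hf
    exact ⟨hf.toFinset.card, fun h => lt_irrefl _ (h hf)⟩
  · rintro ⟨n, hn⟩
    by_contra hinf
    exact hn (fun hf => absurd hf hinf)

lemma hasNth_iff_get?_ne {α β : Type*} {p : α → Option β} {s : Stream'.Seq α} {n : ℕ} :
    HasNth (fmPred p s) n ↔ (seqFilterMap p s).get? n ≠ none := by
  rw [Ne, sfm_get?_eq_none, not_not]

lemma nonempty_iff_hasNth0 {P : ℕ → Prop} :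
    (setOf P).Nonempty ↔ HasNth P 0 := by
  constructor
  · rintro ⟨i, hi⟩
    exact hasNth_mono (Nat.zero_le _) (hasNth_iff.mpr ⟨i, hi, rfl⟩)
  · intro h
    obtain ⟨i, hi, -⟩ := hasNth_iff.mp h
    exact ⟨i, hi⟩

lemma hasNth_iff_lt_card {P : ℕ → Prop} {n : ℕ} (hf : (setOf P).Finite) :
    HasNth P n ↔ n < hf.toFinset.card := by
  constructor
  · intro h; exact h hf
  · intro h hf'
    rwa [Subsingleton.elim hf' hf]

lemma sw_hasNth_transfer {π : Player} {Γ Δ : Run} (hd : Delay π Δ Γ) (n : ℕ) :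
    HasNth (fmPred swf Δ) n ↔ HasNth (fmPred swf Γ) n := by
  rw [hasNth_iff_get?_ne, hasNth_iff_get?_ne, swseq_eq_of_delay hd]

lemma swFin_transfer {π : Player} {Γ Δ : Run} (hd : Delay π Δ Γ) :
    (SwSetP Player.bot Δ).Finite ↔ (SwSetP Player.bot Γ).Finite := by
  rw [swSetP_eq, swSetP_eq, finite_iff_exists_not_hasNth, finite_iff_exists_not_hasNth]
  constructor <;> rintro ⟨n, hn⟩ <;> exact ⟨n, fun h => hn (by rw [sw_hasNth_transfer hd] at *; tauto)⟩

lemma swNe_transfer {π : Player} {Γ Δ : Run} (hd : Delay π Δ Γ) :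
    (SwSetP Player.bot Δ).Nonempty ↔ (SwSetP Player.bot Γ).Nonempty := by
  rw [swSetP_eq, swSetP_eq, nonempty_iff_hasNth0, nonempty_iff_hasNth0]
  exact sw_hasNth_transfer hd 0

lemma lastBits_spec (Γ : Run)
    (hcond : (SwSetP Player.bot Γ).Finite ∧ (SwSetP Player.bot Γ).Nonempty) :
    ∃ c : ℕ, (∀ n, (seqFilterMap swf Γ).get? n = none ↔ c ≤ n) ∧
      lastSwitchBitsP Player.bot Γ = ((seqFilterMap swf Γ).get? (c - 1)).getD [] := by
  have hKf : (setOf (fmPred swf Γ)).Finite := swSetP_eq Γ ▸ hcond.1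
  set c := hKf.toFinset.card with hc
  set M := hcond.1.toFinset.max' (hcond.1.toFinset_nonempty.mpr hcond.2) with hM
  have hMmem : fmPred swf Γ M := by
    have := hcond.1.toFinset.max'_mem (hcond.1.toFinset_nonempty.mpr hcond.2)
    rw [← hM] at this
    have := hcond.1.mem_toFinset.mp this
    rwa [swSetP_eq] at this
  have hMmax : ∀ j, fmPred swf Γ j → j ≤ M := by
    intro j hj
    apply hcond.1.toFinset.le_max'
    rw [hcond.1.mem_toFinset, swSetP_eq]
    exact hj
  -- count up to M+1 equals the card
  have hfilter : {x ∈ Finset.range (M + 1) | fmPred swf Γ x} = hKf.toFinset := by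
    ext j
    simp only [Finset.mem_filter, Finset.mem_range, hKf.mem_toFinset, Set.mem_setOf_eq]
    constructor
    · rintro ⟨-, h⟩; exact h
    · intro h; exact ⟨Nat.lt_succ_of_le (hMmax j h), h⟩
  have hcount : Nat.count (fmPred swf Γ) (M + 1) = c := by
    rw [Nat.count_eq_card_filter_range, hc]
    congr 1
  have hcountM : Nat.count (fmPred swf Γ) M = c - 1 := by
    have := Nat.count_succ (fmPred swf Γ) M
    rw [if_pos hMmem] at this
    omega
  have hcpos : 0 < c := by
    have := Nat.count_succ (fmPred swf Γ) M
    rw [if_pos hMmem] at this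
    omega
  refine ⟨c, ?_, ?_⟩
  · intro n
    rw [sfm_get?_eq_none, hasNth_iff_lt_card hKf, ← hc]
    omega
  · unfold lastSwitchBitsP lastSwitchIdxP
    rw [if_pos hcond, dif_pos hcond]
    obtain ⟨a, ha, hsa⟩ := hMmem
    obtain ⟨w, hw⟩ := Option.isSome_iff_exists.mp hsa
    have hbot : a.1 = Player.bot := by
      by_contra h
      simp [swf, h] at hw
    have hwbits : asBits a.2 = some w := by
      rw [swf, if_pos hbot] at hw
      exact hw
    have hget : (seqFilterMap swf Γ).get? (c - 1) = some w :=
      sfm_get?_eq_some.mpr ⟨M, ⟨a, ha, hsa⟩, hcountM, by rw [ha]; simp [hw]⟩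
    rw [hget, ha]
    simp [hwbits]

lemma lastBits_transfer {π : Player} {Γ Δ : Run} (hd : Delay π Δ Γ) :
    lastSwitchBitsP Player.bot Δ = lastSwitchBitsP Player.bot Γ := by
  by_cases hc : (SwSetP Player.bot Γ).Finite ∧ (SwSetP Player.bot Γ).Nonempty
  · have hcΔ : (SwSetP Player.bot Δ).Finite ∧ (SwSetP Player.bot Δ).Nonempty :=
      ⟨(swFin_transfer hd).mpr hc.1, (swNe_transfer hd).mpr hc.2⟩
    obtain ⟨c1, h1, hb1⟩ := lastBits_spec Γ hc
    obtain ⟨c2, h2, hb2⟩ := lastBits_spec Δ hcΔ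
    have hs := swseq_eq_of_delay hd
    have hcc : c1 = c2 := by
      have e1 : (seqFilterMap swf Δ).get? c1 = none := by rw [hs]; exact (h1 c1).mpr le_rfl
      have e2 : (seqFilterMap swf Γ).get? c2 = none := by rw [← hs]; exact (h2 c2).mpr le_rfl
      have := (h2 c1).mp e1
      have := (h1 c2).mp e2
      omega
    rw [hb1, hb2, hs, hcc]
  · have hcΔ : ¬ ((SwSetP Player.bot Δ).Finite ∧ (SwSetP Player.bot Δ).Nonempty) := by
      intro h
      exact hc ⟨(swFin_transfer hd).mp h.1, (swNe_transfer hd).mp h.2⟩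
    unfold lastSwitchBitsP
    rw [if_neg hc, if_neg hcΔ]

lemma tStream_transfer {π : Player} {Γ Δ : Run} (hd : Delay π Δ Γ) :
    tStream Δ = tStream Γ := by
  unfold tStream
  rw [lastBits_transfer hd]

end Infra4

section Infra5
open Classical

lemma legal_prefix_A {A : Game} (hA : A.IsGame) {X : Run} (h : A.legal X) (n : ℕ) :
    A.legal (Stream'.Seq.ofList (Stream'.Seq.take n X)) :=
  (hA.2 X).1 h n

lemma not_illegalBy_of_legal {A : Game} (hA : A.IsGame) {X : Run} (h : A.legal X)
    (ρ : Player) : ¬ A.IllegalBy ρ X := by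
  rintro ⟨n, -, hbad, -⟩
  exact hbad (legal_prefix_A hA h (n + 1))

lemma loose_legal_prefix {A : Game} (hA : A.IsGame) {Γ : Run}
    (hΓ : (loose A).legal Γ) (n : ℕ) :
    (loose A).legal (Stream'.Seq.ofList (Stream'.Seq.take n Γ)) := by
  constructor
  · intro i lm h
    rw [Stream'.Seq.ofList_get?, Stream'.Seq.getElem?_take] at h
    split at h
    · exact hΓ.1 i lm h
    · exact absurd h (by simp)
  · intro v
    show A.legal (seqFilterMap (subFn v) _)
    rw [sfm_ofList, sfm_take]
    exact legal_prefix_A hA (hΓ.2 v) _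

lemma not_illegalBy_loose {A : Game} (hA : A.IsGame) {Γ : Run}
    (hΓ : (loose A).legal Γ) (ρ : Player) : ¬ (loose A).IllegalBy ρ Γ := by
  rintro ⟨n, -, hbad, -⟩
  exact hbad (loose_legal_prefix hA hΓ (n + 1))

lemma loose_wins_eq (A : Game) (Γ : Run) :
    (loose A).wins Γ =
      if (SwSetP Player.bot Γ).Finite ∧ A.won Player.bot (subAt (tStream Γ) Γ)
      then Player.bot else Player.top := rfl

end Infra5

/-- Let `A` be a static constant game and let `Γ`, `Δ` be legal
runs of `⫰ᴸA` with `Δ` a `π`-delay of `Γ`. If `Γ` is a `π`-won run of `⫰ᴸA`, then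
so is `Δ`. -/
theorem loose_won_of_delay (A : Game) (hA : A.IsGame) (hAs : A.Static)
    (π : Player) (Γ Δ : Run)
    (hΓ : (loose A).legal Γ) (hΔ : (loose A).legal Δ) (hd : Delay π Δ Γ)
    (hw : (loose A).won π Γ) :
    (loose A).won π Δ := by
  classical
  have hwΓ : (loose A).wins Γ = π := by
    rcases hw with ⟨-, h⟩ | hbad
    · exact h
    · exact absurd hbad (not_illegalBy_loose hA hΓ _)
  have hD : Delay π (subAt (tStream Γ) Δ) (subAt (tStream Γ) Γ) :=
    delay_sfm π (subFn (tStream Γ)) (subFn_comm (tStream Γ)) hd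
  have hfin : (SwSetP Player.bot Δ).Finite ↔ (SwSetP Player.bot Γ).Finite :=
    swFin_transfer hd
  have hlegΓ : A.legal (subAt (tStream Γ) Γ) := hΓ.2 (tStream Γ)
  have hlegΔ : A.legal (subAt (tStream Γ) Δ) := hΔ.2 (tStream Γ)
  refine Or.inl ⟨hΔ, ?_⟩
  rw [loose_wins_eq] at hwΓ ⊢
  rw [tStream_transfer hd]
  cases π with
  | bot =>
    split_ifs at hwΓ with hcond
    rw [if_pos ⟨hfin.mpr hcond.1, hAs Player.bot _ _ hD hcond.2⟩]
  | top =>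
    split_ifs at hwΓ with hcond
    have hkey : ¬ ((SwSetP Player.bot Δ).Finite ∧ A.won Player.bot (subAt (tStream Γ) Δ)) := by
      rintro ⟨hfΔ, hwb⟩
      have hfΓ := hfin.mp hfΔ
      have hnb : ¬ A.won Player.bot (subAt (tStream Γ) Γ) := fun h => hcond ⟨hfΓ, h⟩
      have hwt : A.won Player.top (subAt (tStream Γ) Γ) := by
        left
        refine ⟨hlegΓ, ?_⟩
        cases hv : A.wins (subAt (tStream Γ) Γ) with
        | top => rfl
        | bot => exact absurd (Or.inl ⟨hlegΓ, hv⟩) hnb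
      have hwtΔ := hAs Player.top _ _ hD hwt
      have h1 : A.wins (subAt (tStream Γ) Δ) = Player.top := by
        rcases hwtΔ with ⟨-, h⟩ | hbad
        · exact h
        · exact absurd hbad (not_illegalBy_of_legal hA hlegΔ _)
      rcases hwb with ⟨-, h2⟩ | hbad
      · rw [h1] at h2
        exact absurd h2 (by decide)
      · exact absurd hbad (not_illegalBy_of_legal hA hlegΔ _)
    rw [if_neg hkey]
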